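/- Let p ≥ 1, let t_1, …, t_p be nonnegative real travel times (t_y is the travel time from location l_{y-1} to l_y), let α_0 be the driver's earliest departure time and α_1, …, α_p the passengers' earliest departure times at their pick-up locations l_1, …, l_p. For a departure time τ ≥ α_0, define the departure time from each location recursively by D_0(τ) = τ and D_y(τ) = max(D_{y-1}(τ) + t_y, α_y) for 1 ≤ y ≤ p, so that D_p(τ) − τ is the driver's total travel time to reach l_p when departing at time τ. Let τ* = max(α_0, max_{1 ≤ y ≤ p} (α_y − (t_1 + ⋯ + t_y))). Then τ* ≥ α_0, D_p(τ*) − τ* = t_1 + ⋯ + t_p, and for every τ ≥ α_0, D_p(τ*) − τ* ≤ D_p(τ) − τ; that is, the latest departure time τ* minimizes the driver's total travel time to reach l_p. -/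

import Mathlib

/-- Departure time from location `y` when the driver departs the origin at
time `τ`: the driver travels `t y` from location `y-1` to location `y` and
cannot depart location `y` before the passenger's earliest departure time
`α y`, waiting there if arriving early. -/
noncomputable def Dep (t α : ℕ → ℝ) (τ : ℝ) : ℕ → ℝ
  | 0 => τ
  | (y + 1) => max (Dep t α τ y + t (y + 1)) (α (y + 1))

lemma dep_lower (p : ℕ) (t α : ℕ → ℝ) (τ : ℝ) :
    ∀ y, y ≤ p → τ + ∑ z ∈ Finset.Icc 1 y, t z ≤ Dep t α τ y := by
  intro y
  induction y with
  | zero => intro _; simp [Dep]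
  | succ n ih =>
    intro hy
    rw [show Finset.Icc 1 (n+1) = Finset.Icc 1 n ∪ {n+1} by
      ext x; simp [Finset.mem_Icc]; omega]
    rw [Finset.sum_union (by simp [Finset.mem_Icc])]
    simp only [Dep, Finset.sum_singleton, ← add_assoc]
    exact le_trans (add_le_add (ih (by omega)) (le_refl (t (n+1)))) (le_max_left _ _)

lemma dep_exact (p : ℕ) (t α : ℕ → ℝ) (τ : ℝ)
    (h : ∀ z, 1 ≤ z → z ≤ p → α z ≤ τ + ∑ w ∈ Finset.Icc 1 z, t w) :
    ∀ y, y ≤ p → Dep t α τ y = τ + ∑ z ∈ Finset.Icc 1 y, t z := by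
  intro y
  induction y with
  | zero => intro _; simp [Dep]
  | succ n ih =>
    intro hy
    have hsum : ∑ z ∈ Finset.Icc 1 (n+1), t z = (∑ z ∈ Finset.Icc 1 n, t z) + t (n+1) := by
      rw [show Finset.Icc 1 (n+1) = Finset.Icc 1 n ∪ {n+1} by
        ext x; simp [Finset.mem_Icc]; omega]
      rw [Finset.sum_union (by simp [Finset.mem_Icc])]
      simp
    simp only [Dep, ih (by omega), hsum, ← add_assoc]
    exact max_eq_left (by have := h (n+1) (by omega) hy; rw [hsum] at this; linarith)

/-- the latest departure time `τ*` is at least `α 0`, yields a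
total travel time to `l_p` equal to `t_1 + ⋯ + t_p`, and minimizes the
driver's total travel time to reach `l_p` among all departure times `τ ≥ α 0`. -/
theorem stmt_2 (p : ℕ) (hp : 1 ≤ p) (t α : ℕ → ℝ)
    (ht : ∀ y, 1 ≤ y → y ≤ p → 0 ≤ t y)
    (τs : ℝ)
    (hτs : τs = max (α 0) ((Finset.Icc 1 p).sup' (Finset.nonempty_Icc.mpr hp)
      (fun y => α y - ∑ z ∈ Finset.Icc 1 y, t z))) :
    α 0 ≤ τs ∧
    Dep t α τs p - τs = ∑ y ∈ Finset.Icc 1 p, t y ∧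
    ∀ τ, α 0 ≤ τ → Dep t α τs p - τs ≤ Dep t α τ p - τ := by
  have h0 : α 0 ≤ τs := hτs ▸ le_max_left _ _
  have hlate : ∀ z, 1 ≤ z → z ≤ p → α z ≤ τs + ∑ w ∈ Finset.Icc 1 z, t w := by
    intro z h1 h2
    have : α z - ∑ w ∈ Finset.Icc 1 z, t w ≤ τs := by
      rw [hτs]
      exact le_trans (Finset.le_sup' (fun y => α y - ∑ z ∈ Finset.Icc 1 y, t z) (Finset.mem_Icc.mpr ⟨h1, h2⟩)) (le_max_right _ _)
    linarith
  have hex := dep_exact p t α τs hlate p le_rfl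
  refine ⟨h0, by rw [hex]; ring, fun τ _ => ?_⟩
  have := dep_lower p t α τ p le_rfl
  rw [hex]
  linarith
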